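/- Let k be a positive integer, β, γ > 0 with β > γ, and let z* > 0 be the unique positive real with Σ_{m=1}^{k} (z*)^m = kγ/β. Define θ* ∈ ℝ^k by θ*_m = (k + 1 − m) ln z* for m = 1,…,k, and S_k(θ) = ln( (Σ_{m=1}^{k} e^{θ_m}) / k ) − (γ/β)(1 − k / Σ_{m=1}^{k} e^{θ_m}). Then S_k(θ*) = 1 − (γ/β) − ln(β/γ). Consequently the action A_k = −S_k(θ*) equals (γ/β) − 1 + ln(β/γ) = (1/R₀) − 1 + ln R₀ for every k, where R₀ = β/γ. -/

import Mathlib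

/-- For the SIS model with `k` Erlang infectious stages and `R₀ = β/γ > 1`,
evaluating `S_k` at the non-classical equilibrium
`θ*_m = (k+1-m) ln z*` (where `Σ_{m=1}^k (z*)^m = kγ/β`) gives
`S_k(θ*) = 1 - γ/β - ln(β/γ)`, so the action `A_k = -S_k(θ*)` equals
`(1/R₀) - 1 + ln R₀` for every `k`. -/
theorem sis_erlang_action
    (k : ℕ) (hk : 0 < k) (β γ z : ℝ) (hγ : 0 < γ) (hγβ : γ < β) (hz : 0 < z)
    (hzeq : ∑ m ∈ Finset.range k, z ^ (m + 1) = k * γ / β) :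
    let θs : Fin k → ℝ := fun m => ((k - (m : ℕ) : ℕ) : ℝ) * Real.log z
    let S : (Fin k → ℝ) → ℝ := fun θ =>
      Real.log ((∑ m : Fin k, Real.exp (θ m)) / k) -
        (γ / β) * (1 - k / ∑ m : Fin k, Real.exp (θ m))
    S θs = 1 - γ / β - Real.log (β / γ) ∧
      -S θs = γ / β - 1 + Real.log (β / γ) := by
  intro θs S
  have hβ : (0:ℝ) < β := hγ.trans hγβ
  have hkR : (0:ℝ) < (k:ℝ) := by exact_mod_cast hk
  have hsum : (∑ m : Fin k, Real.exp (θs m)) = k * γ / β := by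
    have h1 : (∑ m : Fin k, Real.exp (θs m)) = ∑ m ∈ Finset.range k, z ^ (k - m) := by
      simp only [θs]
      rw [Fin.sum_univ_eq_sum_range (fun m => Real.exp (((k - m : ℕ) : ℝ) * Real.log z))]
      refine Finset.sum_congr rfl fun m hm => ?_
      rw [mul_comm, Real.exp_mul, Real.exp_log hz, Real.rpow_natCast]
    have h2 : (∑ m ∈ Finset.range k, z ^ (k - m)) = ∑ m ∈ Finset.range k, z ^ (m + 1) := by
      rw [← Finset.sum_range_reflect]
      refine Finset.sum_congr rfl fun m hm => ?_
      rw [Finset.mem_range] at hm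
      congr 1
      omega
    rw [h1, h2, hzeq]
  have hSval : S θs = Real.log (γ / β) - (γ / β) * (1 - β / γ) := by
    show Real.log ((∑ m : Fin k, Real.exp (θs m)) / k) -
        (γ / β) * (1 - k / ∑ m : Fin k, Real.exp (θs m)) = _
    rw [hsum,
      show ((k:ℝ) * γ / β) / k = γ / β by field_simp,
      show (k:ℝ) / ((k:ℝ) * γ / β) = β / γ by
        rw [div_div_eq_mul_div, mul_div_mul_left β γ (ne_of_gt hkR)]]
  have hlog : Real.log (γ / β) = - Real.log (β / γ) := by
    rw [← Real.log_inv]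
    congr 1
    field_simp
  have : S θs = 1 - γ / β - Real.log (β / γ) := by
    rw [hSval, hlog]
    have h2 : (γ / β) * (1 - β / γ) = γ / β - 1 := by
      field_simp
    rw [h2]; ring
  exact ⟨this, by rw [this]; ring⟩
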